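/- arXiv:2003.05347 — 5 statements merged into one kernel-verified Lean document; each statement's English description precedes it below -/
import Mathlib

section
/- The numerical range of a bounded linear operator on a complex Hilbert space is a convex subset of the complex numbers (Toeplitz–Hausdorff theorem). -/
open scoped ComplexInnerProductSpace
open Complex

noncomputable section

variable {H : Type*} [NormedAddCommGroup H] [InnerProductSpace ℂ H] [CompleteSpace H]

/-- The numerical range W(A) = {⟨Ax,x⟩ : ‖x‖ = 1}, inner product linear in `A x`. -/
def numRange (A : H →L[ℂ] H) : Set ℂ :=
  {z | ∃ x : H, ‖x‖ = 1 ∧ ⟪x, A x⟫ = z}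

/-- The real part Re(B) = (B + B*)/2. -/
def reP (A : H →L[ℂ] H) : H →L[ℂ] H :=
  (1/2 : ℂ) • (A + ContinuousLinearMap.adjoint A)

/-- The essential numerical range: intersection of cl(W(A+K)) over compact K. -/
def essNumRange (A : H →L[ℂ] H) : Set ℂ :=
  ⋂ K : {K : H →L[ℂ] H // IsCompactOperator ⇑K}, closure (numRange (A + (K : H →L[ℂ] H)))

/-- The supremum of the real points of the spectrum of T. -/
def sMax (T : H →L[ℂ] H) : ℝ := sSup {t : ℝ | (t : ℂ) ∈ spectrum ℂ T}

/-- Fredholm: finite-dimensional kernel and cokernel. -/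
def IsFredholmOp (T : H →L[ℂ] H) : Prop :=
  FiniteDimensional ℂ (LinearMap.ker (T : H →ₗ[ℂ] H)) ∧
    FiniteDimensional ℂ (H ⧸ LinearMap.range (T : H →ₗ[ℂ] H))

/-- The essential spectrum: those z with T - z•I not Fredholm. -/
def essSpec (T : H →L[ℂ] H) : Set ℂ :=
  {z : ℂ | ¬ IsFredholmOp (T - z • (1 : H →L[ℂ] H))}

private lemma key (A : H →L[ℂ] H) (x y : H) (hx : ‖x‖ = 1) (hy : ‖y‖ = 1)
    (hxA : ⟪x, A x⟫ = 0) (hyA : ⟪y, A y⟫ = 1) {t : ℝ} (ht0 : 0 ≤ t) (ht1 : t ≤ 1) :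
    ∃ z : H, ‖z‖ = 1 ∧ ⟪z, A z⟫ = (t : ℂ) := by
  set u : ℂ := ⟪x, A y⟫ with hu
  set v : ℂ := ⟪y, A x⟫ with hv
  set d : ℂ := v - starRingEnd ℂ u with hd
  -- choose a unimodular c with (c*d).im = 0
  obtain ⟨c, hc, hcd⟩ : ∃ c : ℂ, ‖c‖ = 1 ∧ (c * d).im = 0 := by
    by_cases h : d = 0
    · exact ⟨1, by simp, by simp [h]⟩
    · refine ⟨starRingEnd ℂ d / ‖d‖, ?_, ?_⟩
      · rw [norm_div]
        simp [h]
      · have h2 : starRingEnd ℂ d * d = ((normSq d : ℝ) : ℂ) := by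
          rw [mul_comm]; exact Complex.mul_conj d
        have h3 : starRingEnd ℂ d / (‖d‖ : ℂ) * d = ((normSq d / ‖d‖ : ℝ) : ℂ) := by
          rw [div_mul_eq_mul_div, h2]; push_cast; ring
        rw [h3, Complex.ofReal_im]
  set r : ℝ := (starRingEnd ℂ c * u + c * v).re with hr
  have hrc : starRingEnd ℂ c * u + c * v = (r : ℝ) := by
    refine Complex.ext (by simp [hr]) ?_
    have h1 : starRingEnd ℂ c * u = starRingEnd ℂ (c * starRingEnd ℂ u) := by
      rw [map_mul, Complex.conj_conj]
    have h2 : (starRingEnd ℂ c * u + c * v).im = (c * (v - starRingEnd ℂ u)).im := by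
      rw [h1, mul_sub]
      simp [Complex.add_im, Complex.sub_im, Complex.conj_im]
      ring
    rw [h2, ← hd, hcd, Complex.ofReal_im]
  set z : ℝ → H := fun s => ((s : ℂ) * c) • x + ((1 : ℂ) - (s : ℝ)) • y with hz
  have hgs : ∀ s : ℝ, ⟪z s, A (z s)⟫ = ((s * (1 - s) * r + (1 - s) ^ 2 : ℝ) : ℂ) := by
    intro s
    simp only [hz, map_add, map_smul]
    simp only [inner_add_left, inner_add_right, inner_smul_left, inner_smul_right,
      hxA, hyA, ← hu, ← hv, map_mul, Complex.conj_ofReal, map_sub, map_one]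
    push_cast
    linear_combination ((s : ℂ) * (1 - (s : ℂ))) * hrc
  have hzne : ∀ s : ℝ, s ∈ Set.Icc (0:ℝ) 1 → z s ≠ 0 := by
    rintro s ⟨hs0, hs1⟩ hzs
    have hnorm : ‖((s : ℂ) * c) • x‖ = ‖((1 : ℂ) - (s : ℝ)) • y‖ := by
      have : ((s : ℂ) * c) • x = -(((1 : ℂ) - (s : ℝ)) • y) := by
        rw [eq_neg_iff_add_eq_zero]; exact hzs
      rw [this, norm_neg]
    rw [norm_smul, norm_smul, hx, hy, norm_mul, hc] at hnorm
    have h1s : ‖(1 : ℂ) - (s : ℝ)‖ = 1 - s := by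
      rw [show (1 : ℂ) - (s : ℝ) = ((1 - s : ℝ) : ℂ) by push_cast; ring,
        Complex.norm_real, Real.norm_eq_abs, _root_.abs_of_nonneg (by linarith)]
    have hsn : ‖(s : ℂ)‖ = s := by rw [Complex.norm_real, Real.norm_eq_abs, _root_.abs_of_nonneg hs0]
    rw [hsn, h1s, mul_one, mul_one, mul_one] at hnorm
    have hs : s = 1/2 := by linarith
    have h2 : ((1/2 : ℂ)) • (c • x + y) = z s := by
      rw [hz]; subst hs; push_cast; module
    have h3 : c • x + y = 0 := by
      rw [hzs] at h2
      rcases smul_eq_zero.mp h2 with h | h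
      · exact absurd h (by norm_num)
      · exact h
    have hyx : y = -(c • x) := eq_neg_of_add_eq_zero_right h3
    have hone : (1 : ℂ) = 0 := by
      rw [← hyA, hyx]
      simp [inner_neg_neg, inner_smul_left, inner_smul_right, hxA]
    exact one_ne_zero hone
  set f : ℝ → ℝ := fun s => (⟪z s, A (z s)⟫).re / ‖z s‖ ^ 2 with hf
  have hzc : Continuous z := by
    apply Continuous.add
    · exact (Continuous.mul Complex.continuous_ofReal continuous_const).smul continuous_const
    · exact (Continuous.sub continuous_const Complex.continuous_ofReal).smul continuous_const
  have hfc : ContinuousOn f (Set.Icc 0 1) := by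
    apply ContinuousOn.div
    · exact (Complex.continuous_re.comp ((hzc.inner (A.continuous.comp hzc)))).continuousOn
    · exact ((hzc.norm).pow 2).continuousOn
    · intro s hs
      exact pow_ne_zero 2 (norm_ne_zero_iff.mpr (hzne s hs))
  have hf0 : f 0 = 1 := by
    have hz0 : z 0 = y := by simp [hz]
    simp [hf, hz0, hyA, hy]
  have hf1 : f 1 = 0 := by
    have : (⟪z 1, A (z 1)⟫).re = 0 := by rw [hgs 1]; norm_num
    simp [hf, this]
  have hiv := intermediate_value_Icc' (by norm_num : (0:ℝ) ≤ 1) hfc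
  rw [hf0, hf1] at hiv
  obtain ⟨s, hs, hfs⟩ := hiv ⟨ht0, ht1⟩
  have hzs2 : ‖z s‖ ≠ 0 := norm_ne_zero_iff.mpr (hzne s hs)
  refine ⟨((‖z s‖⁻¹ : ℝ) : ℂ) • z s, ?_, ?_⟩
  · rw [norm_smul, Complex.norm_real, Real.norm_eq_abs, abs_inv, abs_norm, inv_mul_cancel₀ hzs2]
  · have hfsv : f s = (s * (1 - s) * r + (1 - s) ^ 2) / ‖z s‖ ^ 2 := by
      show (⟪z s, A (z s)⟫).re / ‖z s‖ ^ 2 = _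
      rw [hgs s, Complex.ofReal_re]
    have hzc2 : ((‖z s‖ : ℝ) : ℂ) ≠ 0 := Complex.ofReal_ne_zero.mpr hzs2
    rw [inner_smul_left, map_smul, inner_smul_right, Complex.conj_ofReal, hgs s, ← hfs, hfsv]
    push_cast
    field_simp

/-- Toeplitz–Hausdorff: the numerical range is convex. -/
theorem stmt0 (A : H →L[ℂ] H) : Convex ℝ (numRange A) := by
  rintro a ⟨x, hx, hxa⟩ b ⟨y, hy, hyb⟩ p q hp hq hpq
  have hxx : ⟪x, x⟫ = (1 : ℂ) := by
    rw [inner_self_eq_norm_sq_to_K, hx]; norm_num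
  by_cases hab : a = b
  · refine ⟨x, hx, ?_⟩
    rw [hxa, ← hab, Complex.real_smul, Complex.real_smul, ← add_mul, ← Complex.ofReal_add,
      hpq, Complex.ofReal_one, one_mul]
  · have hyy : ⟪y, y⟫ = (1 : ℂ) := by
      rw [inner_self_eq_norm_sq_to_K, hy]; norm_num
    have hba : b - a ≠ 0 := sub_ne_zero.mpr (Ne.symm hab)
    set B : H →L[ℂ] H := (b - a)⁻¹ • (A - a • (1 : H →L[ℂ] H)) with hB
    have hBapp : ∀ w : H, B w = (b - a)⁻¹ • (A w - a • w) := by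
      intro w
      simp [hB, ContinuousLinearMap.smul_apply, ContinuousLinearMap.sub_apply,
        ContinuousLinearMap.one_apply]
    have hxB : ⟪x, B x⟫ = 0 := by
      rw [hBapp, inner_smul_right, inner_sub_right, inner_smul_right, hxa, hxx, mul_one,
        sub_self, mul_zero]
    have hyB : ⟪y, B y⟫ = 1 := by
      rw [hBapp, inner_smul_right, inner_sub_right, inner_smul_right, hyb, hyy, mul_one]
      exact inv_mul_cancel₀ hba
    obtain ⟨z, hz1, hz2⟩ := key B x y hx hy hxB hyB hq (by linarith)
    refine ⟨z, hz1, ?_⟩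
    have hzz : ⟪z, z⟫ = (1 : ℂ) := by
      rw [inner_self_eq_norm_sq_to_K, hz1]; norm_num
    have hAz : ⟪z, A z⟫ = (b - a) * ⟪z, B z⟫ + a * ⟪z, z⟫ := by
      rw [hBapp, inner_smul_right, inner_sub_right, inner_smul_right]
      field_simp
      ring
    rw [hAz, hz2, hzz, mul_one]
    have hpc : (p : ℂ) = 1 - (q : ℂ) := by
      have : p = 1 - q := by linarith
      rw [this]; push_cast; ring
    rw [Complex.real_smul, Complex.real_smul, hpc]
    ring
end
end

section
/- If A is a compact operator on an infinite-dimensional complex Hilbert space, then the essential numerical range of A equals {0}. -/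
open scoped ComplexInnerProductSpace
open Complex

noncomputable section

variable {H : Type*} [NormedAddCommGroup H] [InnerProductSpace ℂ H] [CompleteSpace H]

/-- If `T` is compact on an infinite-dimensional space, then `0` is in the closure of its
numerical range. -/
lemma zero_mem_closure_numRange (h : ¬ FiniteDimensional ℂ H) (T : H →L[ℂ] H)
    (hT : IsCompactOperator ⇑T) : (0 : ℂ) ∈ closure (numRange T) := by
  by_contra h0
  rw [Metric.mem_closure_iff] at h0
  push_neg at h0
  obtain ⟨ε, hε, hb⟩ := h0
  -- the key lower bound on the numerical range
  have key : ∀ x : H, ‖x‖ ^ 2 * ((⟨ε, hε.le⟩ : NNReal) : ℝ) ≤ ‖⟪T x, x⟫‖ := by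
    intro x
    by_cases hx : x = 0
    · simp [hx]
    · have hxn : ‖x‖ ≠ 0 := norm_ne_zero_iff.mpr hx
      set a : ℂ := ((‖x‖⁻¹ : ℝ) : ℂ) with ha
      set u : H := a • x with hu
      have hna : ‖a‖ = ‖x‖⁻¹ := by
        rw [ha, Complex.norm_real, Real.norm_eq_abs, _root_.abs_of_nonneg (inv_nonneg.mpr (norm_nonneg x))]
      have hun : ‖u‖ = 1 := by
        rw [hu, norm_smul, hna, inv_mul_cancel₀ hxn]
      have hmem : ⟪u, T u⟫ ∈ numRange T := ⟨u, hun, rfl⟩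
      have hεle := hb _ hmem
      rw [dist_zero_left] at hεle
      have hval : ⟪u, T u⟫ = (starRingEnd ℂ) a * (a * ⟪x, T x⟫) := by
        rw [hu, map_smul, inner_smul_left, inner_smul_right]
      have hnorm : ‖⟪u, T u⟫‖ = ‖x‖⁻¹ * (‖x‖⁻¹ * ‖⟪x, T x⟫‖) := by
        rw [hval, norm_mul, norm_mul, RCLike.norm_conj, hna]
      rw [hnorm] at hεle
      have hIP : ‖⟪T x, x⟫‖ = ‖⟪x, T x⟫‖ := norm_inner_symm _ _
      rw [hIP]
      have hx2 : (0 : ℝ) < ‖x‖ := norm_pos_iff.mpr hx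
      have hfin : ε * ‖x‖ ^ 2 ≤ ‖⟪x, T x⟫‖ :=
        calc ε * ‖x‖ ^ 2 ≤ (‖x‖⁻¹ * (‖x‖⁻¹ * ‖⟪x, T x⟫‖)) * ‖x‖ ^ 2 :=
              mul_le_mul_of_nonneg_right hεle (by positivity)
          _ = ‖⟪x, T x⟫‖ * ((‖x‖⁻¹ * ‖x‖) * (‖x‖⁻¹ * ‖x‖)) := by ring
          _ = ‖⟪x, T x⟫‖ := by rw [inv_mul_cancel₀ hxn]; ring
      calc ‖x‖ ^ 2 * ((⟨ε, hε.le⟩ : NNReal) : ℝ) = ε * ‖x‖ ^ 2 := by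
            show ‖x‖ ^ 2 * ε = ε * ‖x‖ ^ 2; ring
        _ ≤ ‖⟪x, T x⟫‖ := hfin
  -- hence T is invertible
  have hunit : IsUnit T :=
    T.isUnit_of_forall_le_norm_inner_map (c := ⟨ε, hε.le⟩) (by exact_mod_cast hε) key
  obtain ⟨u, hu⟩ := hunit
  -- so the identity is a compact operator
  have hid : IsCompactOperator (id : H → H) := by
    have hcomp : IsCompactOperator (⇑(↑u⁻¹ : H →L[ℂ] H) ∘ ⇑T) :=
      hT.continuous_comp (↑u⁻¹ : H →L[ℂ] H).continuous
    have heq : (⇑(↑u⁻¹ : H →L[ℂ] H) ∘ ⇑T) = (id : H → H) := by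
      funext x
      have : ((↑u⁻¹ : H →L[ℂ] H) * (↑u : H →L[ℂ] H)) x = (1 : H →L[ℂ] H) x := by
        rw [u.inv_mul]
      simpa [hu, ContinuousLinearMap.mul_apply] using this
    rwa [heq] at hcomp
  -- Riesz: the space would be finite-dimensional
  obtain ⟨K, hKc, hKn⟩ := hid
  rw [Set.preimage_id] at hKn
  obtain ⟨r, hr, hball⟩ := Metric.mem_nhds_iff.mp hKn
  have hsub : Metric.closedBall (0 : H) (r / 2) ⊆ K :=
    (Metric.closedBall_subset_ball (by linarith)).trans hball
  have hcb : IsCompact (Metric.closedBall (0 : H) (r / 2)) :=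
    hKc.of_isClosed_subset Metric.isClosed_closedBall hsub
  exact h (FiniteDimensional.of_isCompact_closedBall₀ ℂ (by linarith) hcb)

/-- The essential numerical range of a compact operator is {0}. -/
theorem stmt8 (h : ¬ FiniteDimensional ℂ H) (A : H →L[ℂ] H)
    (hA : IsCompactOperator ⇑A) : essNumRange A = {0} := by
  have hnt : Nontrivial H := by
    by_contra hn
    rw [not_nontrivial_iff_subsingleton] at hn
    exact h (Module.Finite.of_basis (Module.Basis.empty (ι := Empty) (R := ℂ) (M := H)))
  ext z
  simp only [Set.mem_singleton_iff]
  constructor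
  · intro hz
    have hz' := Set.mem_iInter.mp hz ⟨-A, hA.neg⟩
    have hA0 : A + (-A) = (0 : H →L[ℂ] H) := by simp
    rw [hA0] at hz'
    have hr : numRange (0 : H →L[ℂ] H) = {0} := by
      ext w
      constructor
      · rintro ⟨x, hx, hw⟩
        simp only [Set.mem_singleton_iff]
        rw [← hw]
        simp
      · rintro rfl
        obtain ⟨x, hx0⟩ := exists_ne (0 : H)
        have hxn : ‖x‖ ≠ 0 := norm_ne_zero_iff.mpr hx0
        refine ⟨((‖x‖⁻¹ : ℝ) : ℂ) • x, ?_, by simp⟩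
        rw [norm_smul, Complex.norm_real, Real.norm_eq_abs,
          _root_.abs_of_nonneg (inv_nonneg.mpr (norm_nonneg x)), inv_mul_cancel₀ hxn]
    rw [hr, closure_singleton] at hz'
    exact hz'
  · rintro rfl
    refine Set.mem_iInter.mpr fun K => ?_
    have hc : IsCompactOperator (⇑A + ⇑(K : H →L[ℂ] H)) := hA.add K.2
    have hc' : IsCompactOperator ⇑(A + (K : H →L[ℂ] H)) := by
      rw [ContinuousLinearMap.coe_add']; exact hc
    exact zero_mem_closure_numRange h _ hc'
end
end

section
/- If N is a normal bounded operator on a complex Hilbert space, then the closure of the numerical range W(N) equals the closed convex hull of the spectrum σ(N). -/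
open scoped ComplexInnerProductSpace
open Complex

noncomputable section

variable {H : Type*} [NormedAddCommGroup H] [InnerProductSpace ℂ H] [CompleteSpace H]

section auxStmt9
open Complex Finset


lemma key_re_le [Nontrivial H] (N : H →L[ℂ] H) [IsStarNormal N] (c : ℂ) (x : H) (hx : ‖x‖ = 1) :
    ∃ μ ∈ spectrum ℂ N, ((starRingEnd ℂ) c * ⟪x, N x⟫).re ≤ ((starRingEnd ℂ) c * μ).re := by
  have hσc : IsCompact (spectrum ℂ N) := spectrum.isCompact N
  have hσne : (spectrum ℂ N).Nonempty := spectrum.nonempty N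
  have hφ : Continuous (fun w : ℂ => ((starRingEnd ℂ) c * w).re) :=
    Complex.continuous_re.comp (continuous_const.mul continuous_id)
  obtain ⟨μM, hμM, hmax⟩ := hσc.exists_isMaxOn hσne hφ.continuousOn
  obtain ⟨μm, hμm, hmin⟩ := hσc.exists_isMinOn hσne hφ.continuousOn
  set φ : ℂ → ℝ := fun w => ((starRingEnd ℂ) c * w).re with hφdef
  set M : ℝ := φ μM
  set m : ℝ := φ μm
  have hmM : m ≤ M := hmax hμm
  set t : ℝ := (M + m) / 2 with ht
  set g : ℂ → ℂ := fun w => ((φ w - t : ℝ) : ℂ) with hg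
  have hgc : Continuous g := Complex.continuous_ofReal.comp ((hφ.sub continuous_const))
  set S : H →L[ℂ] H := cfc g N with hS
  have hnorm : ‖S‖ ≤ (M - m) / 2 := by
    apply norm_cfc_le (by linarith)
    intro w hw
    have h1 : φ w ≤ M := hmax hw
    have h2 : m ≤ φ w := hmin hw
    rw [hg]
    simp only [Complex.norm_real, Real.norm_eq_abs]
    rw [abs_le]; constructor <;> simp only [ht] <;> linarith
  -- compute S explicitly
  have hgalt : g = fun w => (2:ℂ)⁻¹ * ((starRingEnd ℂ) c * w + c * (star w)) -
      (fun _ : ℂ => (t : ℂ)) w := by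
    funext w
    have h := Complex.add_conj ((starRingEnd ℂ) c * w)
    simp only [map_mul, RingHom.id_apply, starRingEnd_self_apply] at h
    rw [hg]
    simp only [Complex.ofReal_sub]
    rw [Complex.star_def, h]
    push_cast
    ring
  have hSeq : S = (2:ℂ)⁻¹ • ((starRingEnd ℂ) c • N + c • star N) - algebraMap ℂ (H →L[ℂ] H) t := by
    rw [hS, hgalt]
    rw [cfc_sub _ _ N (by fun_prop) (by fun_prop)]
    rw [cfc_const (t : ℂ) N]
    congr 1
    rw [cfc_const_mul _ _ N (by fun_prop)]
    congr 1
    have hc1 : Continuous fun w : ℂ => (starRingEnd ℂ) c * w := continuous_const.mul continuous_id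
    have hc2 : Continuous fun w : ℂ => c * star w := continuous_const.mul continuous_star
    rw [cfc_add (a := N) _ _ hc1.continuousOn hc2.continuousOn]
    rw [cfc_const_mul ((starRingEnd ℂ) c) (fun w : ℂ => w) N continuous_id.continuousOn,
      cfc_const_mul c (fun w : ℂ => star w) N continuous_star.continuousOn]
    rw [cfc_id' ℂ N, cfc_star (fun w : ℂ => w) N, cfc_id' ℂ N]
  -- inner product computation
  set a : ℂ := ⟪x, N x⟫ with ha
  have hstar : ⟪x, (star N) x⟫ = (starRingEnd ℂ) a := by
    rw [ContinuousLinearMap.star_eq_adjoint, ContinuousLinearMap.adjoint_inner_right,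
      ← inner_conj_symm]
  have hxx : ⟪x, x⟫ = (1 : ℂ) := by
    rw [inner_self_eq_norm_sq_to_K, hx]; norm_num
  have hSx : ⟪x, S x⟫ = ((((starRingEnd ℂ) c * a).re - t : ℝ) : ℂ) := by
    rw [hSeq]
    rw [Algebra.algebraMap_eq_smul_one]
    simp only [ContinuousLinearMap.sub_apply, ContinuousLinearMap.smul_apply,
      ContinuousLinearMap.add_apply, ContinuousLinearMap.one_apply, inner_sub_right,
      inner_smul_right, inner_add_right, hstar, hxx, ← ha]
    have h := Complex.add_conj ((starRingEnd ℂ) c * a)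
    simp only [map_mul, starRingEnd_self_apply] at h
    rw [h]
    push_cast
    ring
  have hre : ((starRingEnd ℂ) c * a).re - t ≤ (M - m) / 2 := by
    have h1 : ((starRingEnd ℂ) c * a).re - t ≤ ‖(⟪x, S x⟫ : ℂ)‖ := by
      rw [hSx, Complex.norm_real, Real.norm_eq_abs]; exact le_abs_self _
    have h2 : ‖(⟪x, S x⟫ : ℂ)‖ ≤ ‖x‖ * ‖S x‖ := norm_inner_le_norm x (S x)
    have h3 : ‖S x‖ ≤ ‖S‖ * ‖x‖ := S.le_opNorm x
    rw [hx] at h2 h3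
    simp only [one_mul, mul_one] at h2 h3
    linarith
  refine ⟨μM, hμM, ?_⟩
  have hgoal : ((starRingEnd ℂ) c * a).re ≤ M := by rw [ht] at hre; linarith
  exact hgoal


-- bump function lemmas
section bumps
variable (δ : ℝ) (l : ℂ)

noncomputable def Fb (w : ℂ) : ℂ := ((min 1 (max 0 (2 - 2 * dist w l / δ)) : ℝ) : ℂ)
noncomputable def Gb (w : ℂ) : ℂ := ((max 0 (1 - 2 * dist w l / δ) : ℝ) : ℂ)

lemma Fb_cont : Continuous (Fb δ l) := by
  apply Complex.continuous_ofReal.comp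
  exact (continuous_const.min ((continuous_const.max
    (continuous_const.sub ((continuous_const.mul ((continuous_id.dist continuous_const))).div_const δ)))))

lemma Gb_cont : Continuous (Gb δ l) := by
  apply Complex.continuous_ofReal.comp
  exact continuous_const.max
    (continuous_const.sub ((continuous_const.mul ((continuous_id.dist continuous_const))).div_const δ))

lemma Fb_norm_le_one (hδ : 0 < δ) (w : ℂ) : ‖Fb δ l w‖ ≤ 1 := by
  rw [Fb, Complex.norm_real, Real.norm_eq_abs, abs_le]
  constructor
  · have : (0:ℝ) ≤ min 1 (max 0 (2 - 2 * dist w l / δ)) := le_min one_pos.le (le_max_left _ _)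
    linarith
  · exact min_le_left _ _

lemma Fb_eq_zero (hδ : 0 < δ) (w : ℂ) (h : δ ≤ dist w l) : Fb δ l w = 0 := by
  rw [Fb]
  have h1 : 2 - 2 * dist w l / δ ≤ 0 := by
    rw [sub_nonpos, le_div_iff₀ hδ]; linarith
  rw [max_eq_left h1, min_eq_right one_pos.le]
  norm_num

lemma Fb_eq_one (hδ : 0 < δ) (w : ℂ) (h : dist w l ≤ δ / 2) : Fb δ l w = 1 := by
  rw [Fb]
  have h1 : 1 ≤ 2 - 2 * dist w l / δ := by
    have h2 : 2 * dist w l / δ ≤ 1 := by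
      rw [div_le_one hδ]; linarith
    linarith
  rw [max_eq_right (by linarith), min_eq_left h1]
  norm_num

lemma Gb_eq_zero (hδ : 0 < δ) (w : ℂ) (h : δ / 2 ≤ dist w l) : Gb δ l w = 0 := by
  rw [Gb]
  have h1 : 1 - 2 * dist w l / δ ≤ 0 := by
    rw [sub_nonpos, le_div_iff₀ hδ]; linarith
  rw [max_eq_left h1]; norm_num

lemma Gb_self (hδ : 0 < δ) : Gb δ l l = 1 := by
  rw [Gb]
  simp [dist_self, max_eq_right]

lemma Fb_mul_Gb (hδ : 0 < δ) : (fun w => Fb δ l w * Gb δ l w) = Gb δ l := by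
  funext w
  by_cases h : dist w l ≤ δ / 2
  · rw [Fb_eq_one δ l hδ w h, one_mul]
  · rw [Gb_eq_zero δ l hδ w (le_of_not_ge h), mul_zero]

lemma Fb_star (w : ℂ) : star (Fb δ l w) = Fb δ l w := by
  rw [Fb, Complex.star_def, Complex.conj_ofReal]

end bumps

lemma Fb_mul_Fb (δ : ℝ) (hδ : 0 < δ) {l m : ℂ} (hlm : 2 * δ ≤ dist l m) (w : ℂ) :
    Fb δ l w * Fb δ m w = 0 := by
  by_cases h : dist w l < δ
  · have h2 : δ ≤ dist w m := by
      by_contra h3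
      push_neg at h3
      have := dist_triangle l w m
      rw [dist_comm l w] at this
      linarith
    rw [Fb_eq_zero δ m hδ w h2, mul_zero]
  · rw [Fb_eq_zero δ l hδ w (le_of_not_gt h), zero_mul]

-- step: fixed vector lemma
lemma exists_unit_fixed (N : H →L[ℂ] H) [IsStarNormal N] (δ : ℝ) (hδ : 0 < δ) (l : ℂ)
    (hl : l ∈ spectrum ℂ N) : ∃ u : H, ‖u‖ = 1 ∧ cfc (Fb δ l) N u = u := by
  have hGnz : cfc (Gb δ l) N ≠ 0 := by
    intro h0
    have hle := norm_apply_le_norm_cfc (Gb δ l) N hl (Gb_cont δ l).continuousOn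
    rw [h0, Gb_self δ l hδ] at hle
    simp at hle
    exact absurd hle (by norm_num)
  have : ∃ y : H, cfc (Gb δ l) N y ≠ 0 := by
    by_contra hy
    push_neg at hy
    exact hGnz (ContinuousLinearMap.ext fun y => hy y)
  obtain ⟨y, hy⟩ := this
  set v : H := cfc (Gb δ l) N y with hv
  have hfix : cfc (Fb δ l) N v = v := by
    rw [hv, ← ContinuousLinearMap.mul_apply,
      ← cfc_mul (Fb δ l) (Gb δ l) N (Fb_cont δ l).continuousOn (Gb_cont δ l).continuousOn,
      Fb_mul_Gb δ l hδ]
  refine ⟨‖v‖⁻¹ • v, ?_, ?_⟩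
  · rw [norm_smul, norm_inv, norm_norm, inv_mul_cancel₀ (norm_ne_zero_iff.mpr hy)]
  · rw [ContinuousLinearMap.map_smul_of_tower, hfix]

lemma cfc_inner_eq (N : H →L[ℂ] H) [IsStarNormal N] (f g : ℂ → ℂ) (hf : Continuous f)
    (hg : Continuous g) (hstar : ∀ w, star (f w) = f w) (u v : H) :
    ⟪cfc f N u, cfc g N v⟫ = ⟪u, cfc (fun w => f w * g w) N v⟫ := by
  have h1 : ContinuousLinearMap.adjoint (cfc f N) = cfc f N := by
    rw [← ContinuousLinearMap.star_eq_adjoint]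
    rw [← cfc_star f N]
    exact cfc_congr fun w _ => hstar w
  calc ⟪cfc f N u, cfc g N v⟫ = ⟪u, cfc f N (cfc g N v)⟫ := by
        rw [← h1, ContinuousLinearMap.adjoint_inner_left, h1]
    _ = ⟪u, (cfc f N * cfc g N) v⟫ := rfl
    _ = ⟪u, cfc (fun w => f w * g w) N v⟫ := by
        rw [← cfc_mul f g N hf.continuousOn hg.continuousOn]

lemma conv_subset_closure [Nontrivial H] (N : H →L[ℂ] H) [IsStarNormal N] :
    convexHull ℝ (spectrum ℂ N) ⊆ closure (numRange N) := by
  intro z hz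
  rw [convexHull_eq_union_convexHull_finite_subsets] at hz
  simp only [Set.mem_iUnion] at hz
  obtain ⟨t, ht, hz⟩ := hz
  rw [Finset.mem_convexHull'] at hz
  obtain ⟨wt, hwt0, hwt1, hwtz⟩ := hz
  rw [Metric.mem_closure_iff]
  intro ε hε
  -- the separation constant
  set δ₀ : ℝ := if h : t.offDiag.Nonempty then t.offDiag.inf' h (fun p => dist p.1 p.2) else 1
    with hδ₀
  have hδ₀pos : 0 < δ₀ := by
    rw [hδ₀]
    split_ifs with h
    · rw [Finset.lt_inf'_iff]
      intro p hp
      exact dist_pos.mpr (Finset.mem_offDiag.mp hp).2.2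
    · norm_num
  have hδ₀le : ∀ l ∈ t, ∀ m ∈ t, l ≠ m → δ₀ ≤ dist l m := by
    intro l hl m hm hne
    have hmem : (l, m) ∈ t.offDiag := Finset.mem_offDiag.mpr ⟨hl, hm, hne⟩
    rw [hδ₀, dif_pos ⟨(l, m), hmem⟩]
    exact Finset.inf'_le _ hmem
  set δ : ℝ := min (ε / 2) (δ₀ / 2) with hδdef
  have hδpos : 0 < δ := lt_min (by linarith) (by linarith)
  have hδε : δ < ε := lt_of_le_of_lt (min_le_left _ _) (by linarith)
  have h2δ : ∀ l ∈ t, ∀ m ∈ t, l ≠ m → 2 * δ ≤ dist l m := by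
    intro l hl m hm hne
    have := hδ₀le l hl m hm hne
    have : δ ≤ δ₀ / 2 := min_le_right _ _
    linarith [hδ₀le l hl m hm hne]
  -- choose unit vectors
  have hchoice : ∀ l ∈ t, ∃ u : H, ‖u‖ = 1 ∧ cfc (Fb δ l) N u = u :=
    fun l hl => exists_unit_fixed N δ hδpos l (ht hl)
  choose! xv hxv1 hxv2 using hchoice
  -- orthogonality
  have hST : ∀ l ∈ t, ∀ m ∈ t, l ≠ m → ⟪xv l, xv m⟫ = (0 : ℂ) := by
    intro l hl m hm hne
    rw [← hxv2 l hl, ← hxv2 m hm,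
      cfc_inner_eq N _ _ (Fb_cont δ l) (Fb_cont δ m) (Fb_star δ l)]
    have : (fun w => Fb δ l w * Fb δ m w) = fun _ : ℂ => (0 : ℂ) :=
      funext fun w => Fb_mul_Fb δ hδpos (h2δ l hl m hm hne) w
    rw [this, cfc_const (0 : ℂ) N, map_zero]
    simp
  have hNT : ∀ l ∈ t, ∀ m ∈ t, l ≠ m → ⟪xv l, N (xv m)⟫ = (0 : ℂ) := by
    intro l hl m hm hne
    have hNm : N (xv m) = cfc (fun w => w * Fb δ m w) N (xv m) := by
      conv_lhs => rw [← hxv2 m hm]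
      rw [cfc_mul (fun w : ℂ => w) (Fb δ m) N continuous_id.continuousOn
        (Fb_cont δ m).continuousOn, cfc_id' ℂ N]
      rfl
    rw [← hxv2 l hl, hNm,
      cfc_inner_eq N (Fb δ l) (fun w => w * Fb δ m w) (Fb_cont δ l)
        (by exact continuous_id.mul (Fb_cont δ m)) (Fb_star δ l)]
    have : (fun w => Fb δ l w * (w * Fb δ m w)) = fun _ : ℂ => (0 : ℂ) := by
      funext w
      have := Fb_mul_Fb δ hδpos (h2δ l hl m hm hne) w
      calc Fb δ l w * (w * Fb δ m w) = Fb δ l w * Fb δ m w * w := by ring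
        _ = 0 := by rw [this, zero_mul]
    rw [this, cfc_const (0 : ℂ) N, map_zero]
    simp
  -- diagonal estimate
  have hdiag : ∀ l ∈ t, ‖N (xv l) - l • xv l‖ ≤ δ := by
    intro l hl
    have hD : N (xv l) - l • xv l = cfc (fun w => (w - l) * Fb δ l w) N (xv l) := by
      have e1 : N (xv l) = cfc (fun w => w * Fb δ l w) N (xv l) := by
        conv_lhs => rw [← hxv2 l hl]
        rw [cfc_mul (fun w : ℂ => w) (Fb δ l) N continuous_id.continuousOn
          (Fb_cont δ l).continuousOn, cfc_id' ℂ N]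
        rfl
      have e2 : l • xv l = cfc (fun w => l * Fb δ l w) N (xv l) := by
        conv_lhs => rw [← hxv2 l hl]
        rw [cfc_const_mul l (Fb δ l) N (Fb_cont δ l).continuousOn]
        rfl
      rw [e1, e2, ← ContinuousLinearMap.sub_apply,
        ← cfc_sub (fun w : ℂ => w * Fb δ l w) (fun w => l * Fb δ l w) N
          (continuous_id.mul (Fb_cont δ l)).continuousOn
          (continuous_const.mul (Fb_cont δ l)).continuousOn]
      exact DFunLike.congr_fun (cfc_congr fun w _ => by ring) (xv l)
    rw [hD]
    have hnorm : ‖cfc (fun w => (w - l) * Fb δ l w) N‖ ≤ δ := by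
      apply norm_cfc_le hδpos.le
      intro w hw
      rw [norm_mul]
      by_cases h : dist w l < δ
      · have h1 : ‖w - l‖ ≤ δ := by rw [← dist_eq_norm]; exact h.le
        have h2 : ‖Fb δ l w‖ ≤ 1 := Fb_norm_le_one δ l hδpos w
        calc ‖w - l‖ * ‖Fb δ l w‖ ≤ δ * 1 := by
              apply mul_le_mul h1 h2 (norm_nonneg _) hδpos.le
          _ = δ := mul_one δ
      · rw [Fb_eq_zero δ l hδpos w (le_of_not_gt h)]
        simp [hδpos.le]
    calc ‖cfc (fun w => (w - l) * Fb δ l w) N (xv l)‖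
        ≤ ‖cfc (fun w => (w - l) * Fb δ l w) N‖ * ‖xv l‖ :=
          ContinuousLinearMap.le_opNorm _ _
      _ ≤ δ * 1 := by
          apply mul_le_mul hnorm (le_of_eq (hxv1 l hl)) (norm_nonneg _) hδpos.le
      _ = δ := mul_one δ
  -- assemble the vector
  set cvec : ℂ → ℂ := fun l => ((Real.sqrt (wt l) : ℝ) : ℂ) with hcvec
  set xx : H := ∑ l ∈ t, cvec l • xv l with hxx
  have hinner_xv : ∀ l ∈ t, ⟪xv l, xv l⟫ = (1 : ℂ) := by
    intro l hl
    rw [inner_self_eq_norm_sq_to_K, hxv1 l hl]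
    norm_num
  have hxv_xx : ∀ l ∈ t, ⟪xv l, xx⟫ = cvec l := by
    intro l hl
    rw [hxx, inner_sum]
    rw [Finset.sum_eq_single l]
    · rw [inner_smul_right, hinner_xv l hl, mul_one]
    · intro m hm hne
      rw [inner_smul_right, hST l hl m hm (Ne.symm hne), mul_zero]
    · intro h; exact absurd hl h
  have hxx_norm : ⟪xx, xx⟫ = (1 : ℂ) := by
    rw [hxx, sum_inner]
    calc ∑ l ∈ t, ⟪cvec l • xv l, xx⟫
        = ∑ l ∈ t, (starRingEnd ℂ) (cvec l) * cvec l := by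
          apply Finset.sum_congr rfl
          intro l hl
          rw [inner_smul_left, hxv_xx l hl]
      _ = ∑ l ∈ t, ((wt l : ℝ) : ℂ) := by
          apply Finset.sum_congr rfl
          intro l hl
          rw [hcvec]
          simp only [Complex.conj_ofReal]
          rw [← Complex.ofReal_mul, Real.mul_self_sqrt (hwt0 l hl)]
      _ = ((∑ l ∈ t, wt l : ℝ) : ℂ) := by push_cast; rfl
      _ = 1 := by rw [hwt1]; norm_num
  have hxxnorm : ‖xx‖ = 1 := by
    have h1 := inner_self_eq_norm_sq (𝕜 := ℂ) (x := xx)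
    rw [hxx_norm] at h1
    have h2 : (‖xx‖ : ℝ) ^ 2 = 1 := by simpa using h1.symm
    have h3 : (‖xx‖ - 1) * (‖xx‖ + 1) = 0 := by nlinarith
    rcases mul_eq_zero.mp h3 with h4 | h4
    · linarith
    · linarith [norm_nonneg xx]
  -- inner product with N
  have hxv_Nxx : ∀ l ∈ t, ⟪xv l, N xx⟫ = cvec l * ⟪xv l, N (xv l)⟫ := by
    intro l hl
    rw [hxx, map_sum, inner_sum]
    rw [Finset.sum_eq_single l]
    · rw [map_smul, inner_smul_right]
    · intro m hm hne
      rw [map_smul, inner_smul_right, hNT l hl m hm (Ne.symm hne), mul_zero]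
    · intro h; exact absurd hl h
  have hBval : ⟪xx, N xx⟫ = ∑ l ∈ t, ((wt l : ℝ) : ℂ) * ⟪xv l, N (xv l)⟫ := by
    conv_lhs => rw [hxx]
    rw [sum_inner]
    apply Finset.sum_congr rfl
    intro l hl
    rw [inner_smul_left, hxv_Nxx l hl, hcvec]
    simp only [Complex.conj_ofReal]
    rw [← mul_assoc, ← Complex.ofReal_mul, Real.mul_self_sqrt (hwt0 l hl)]
  -- the diagonal inner products are close to l
  have hclose : ∀ l ∈ t, ‖⟪xv l, N (xv l)⟫ - l‖ ≤ δ := by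
    intro l hl
    have : ⟪xv l, N (xv l)⟫ - l = ⟪xv l, N (xv l) - l • xv l⟫ := by
      rw [inner_sub_right, inner_smul_right, hinner_xv l hl, mul_one]
    rw [this]
    calc ‖⟪xv l, N (xv l) - l • xv l⟫‖ ≤ ‖xv l‖ * ‖N (xv l) - l • xv l‖ :=
          norm_inner_le_norm _ _
      _ ≤ 1 * δ := by
          apply mul_le_mul (le_of_eq (hxv1 l hl)) (hdiag l hl) (norm_nonneg _) one_pos.le
      _ = δ := one_mul δ
  -- conclude
  refine ⟨⟪xx, N xx⟫, ⟨xx, hxxnorm, rfl⟩, ?_⟩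
  have hzval : z = ∑ l ∈ t, ((wt l : ℝ) : ℂ) * l := by
    rw [← hwtz]
    apply Finset.sum_congr rfl
    intro l hl
    rw [Complex.real_smul]
  rw [dist_eq_norm, hzval, hBval, ← Finset.sum_sub_distrib]
  have : ∀ l ∈ t, ((wt l : ℝ) : ℂ) * l - ((wt l : ℝ) : ℂ) * ⟪xv l, N (xv l)⟫
      = ((wt l : ℝ) : ℂ) * (l - ⟪xv l, N (xv l)⟫) := by
    intro l hl; ring
  calc ‖∑ l ∈ t, (((wt l : ℝ) : ℂ) * l - ((wt l : ℝ) : ℂ) * ⟪xv l, N (xv l)⟫)‖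
      ≤ ∑ l ∈ t, ‖((wt l : ℝ) : ℂ) * l - ((wt l : ℝ) : ℂ) * ⟪xv l, N (xv l)⟫‖ :=
        norm_sum_le _ _
    _ ≤ ∑ l ∈ t, wt l * δ := by
        apply Finset.sum_le_sum
        intro l hl
        rw [this l hl, norm_mul, Complex.norm_real, Real.norm_eq_abs,
          _root_.abs_of_nonneg (hwt0 l hl), norm_sub_rev]
        exact mul_le_mul_of_nonneg_left (hclose l hl) (hwt0 l hl)
    _ = δ := by rw [← Finset.sum_mul, hwt1, one_mul]
    _ < ε := hδε

end auxStmt9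

/-- For a normal operator, cl(W(N)) is the closed convex hull of the spectrum. -/
theorem stmt9 [Nontrivial H] (N : H →L[ℂ] H)
    (hN : N * ContinuousLinearMap.adjoint N = ContinuousLinearMap.adjoint N * N) :
    closure (numRange N) = closure (convexHull ℝ (spectrum ℂ N)) := by
  have hsn : IsStarNormal N := ⟨hN.symm⟩
  apply Set.Subset.antisymm
  · apply closure_minimal _ isClosed_closure
    intro z hz
    obtain ⟨x, hx, hxz⟩ := hz
    by_contra hzc
    have hconv : Convex ℝ (closure (convexHull ℝ (spectrum ℂ N))) :=
      (convex_convexHull ℝ _).closure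
    obtain ⟨f, u, hfu, huz⟩ := geometric_hahn_banach_closed_point hconv isClosed_closure hzc
    set c : ℂ := ((f 1 : ℝ) : ℂ) + ((f Complex.I : ℝ) : ℂ) * Complex.I with hc
    have hcre : c.re = f 1 := by rw [hc]; simp
    have hcim : c.im = f Complex.I := by rw [hc]; simp
    have hfc : ∀ w : ℂ, f w = ((starRingEnd ℂ) c * w).re := by
      intro w
      have hw : w = w.re • (1 : ℂ) + w.im • Complex.I := by
        simp only [Complex.real_smul, smul_eq_mul, mul_one]
        exact (Complex.re_add_im w).symm
      have h1 : f w = w.re * f 1 + w.im * f Complex.I := by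
        conv_lhs => rw [hw]
        rw [map_add, map_smul, map_smul, smul_eq_mul, smul_eq_mul]
      rw [h1, Complex.mul_re]
      simp only [Complex.conj_re, Complex.conj_im, hcre, hcim]
      ring
    obtain ⟨μ, hμ, hle⟩ := key_re_le N c x hx
    have h1 : f z ≤ f μ := by rw [hfc, hfc, ← hxz]; exact hle
    have h2 : f μ < u := hfu μ (subset_closure (subset_convexHull ℝ _ hμ))
    linarith
  · exact closure_minimal (conv_subset_closure N) isClosed_closure
end
end

section
/- Let N be the bounded diagonal operator on ℓ²(ℕ) (with the index starting at 1) with diagonal entries e^{i/k} for k ∈ ℕ, k ≥ 1. Then the numerical range W(N) is contained in the closed unit disk, the closure of W(N) contains infinitely many points of the unit circle, yet W(N) is not equal to the closed unit disk (in particular, −1 ∉ cl(W(N))). -/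
open scoped ComplexInnerProductSpace
open Complex

noncomputable section

variable {H : Type*} [NormedAddCommGroup H] [InnerProductSpace ℂ H] [CompleteSpace H]

lemma aux_div (k : ℕ+) : Complex.I / (k : ℂ) = ((k:ℝ)⁻¹ : ℝ) * Complex.I := by
  push_cast; ring

lemma aux_abs (k : ℕ+) : ‖Complex.exp (Complex.I / (k:ℂ))‖ = 1 := by
  rw [aux_div]; exact Complex.norm_exp_ofReal_mul_I _

lemma aux_inv_mem (k : ℕ+) : (0:ℝ) < (k:ℝ)⁻¹ ∧ (k:ℝ)⁻¹ ≤ 1 := by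
  constructor
  · positivity
  · rw [inv_le_one_iff₀]; right; exact_mod_cast k.one_le

/-- A diagonal operator with entries e^{i/k}: W(N) is inside the closed unit disk, cl(W(N))
meets the unit circle at infinitely many points, but W(N) is not the closed disk and
-1 ∉ cl(W(N)). -/
theorem stmt14 (N : lp (fun _ : ℕ+ => ℂ) 2 →L[ℂ] lp (fun _ : ℕ+ => ℂ) 2)
    (hN : ∀ (x : lp (fun _ : ℕ+ => ℂ) 2) (k : ℕ+),
      N x k = Complex.exp (Complex.I / (k : ℂ)) * x k) :
    numRange N ⊆ Metric.closedBall (0:ℂ) 1 ∧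
      (closure (numRange N) ∩ Metric.sphere (0:ℂ) 1).Infinite ∧
      numRange N ≠ Metric.closedBall (0:ℂ) 1 ∧
      (-1 : ℂ) ∉ closure (numRange N) := by
  -- key structural facts about elements of the numerical range
  have key : ∀ z ∈ numRange N, ‖z‖ ≤ 1 ∧ Real.cos 1 ≤ z.re := by
    rintro z ⟨x, hx, rfl⟩
    have hsq : HasSum (fun k => ‖x k‖ ^ (2:ℝ)) 1 := by
      have := lp.hasSum_norm (p := 2) (E := fun _ : ℕ+ => ℂ) (by norm_num) x
      simpa [hx] using this
    have hsq' : HasSum (fun k => ‖x k‖ ^ 2) 1 := by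
      convert hsq using 2 with k
      rw [← Real.rpow_natCast]; norm_num
    -- the inner product as a sum
    have hterm : ∀ k : ℕ+, ⟪x k, N x k⟫ =
        Complex.exp (Complex.I / (k:ℂ)) * ((‖x k‖ ^ 2 : ℝ) : ℂ) := by
      intro k
      rw [hN x k]
      simp [RCLike.inner_apply, mul_comm, ← Complex.normSq_eq_norm_sq,
        Complex.normSq_eq_conj_mul_self]
      rw [mul_assoc, Complex.mul_conj']
    have hsumm : Summable (fun k : ℕ+ => ⟪x k, N x k⟫) := lp.summable_inner x (N x)
    have hinner : ⟪x, N x⟫ = ∑' k : ℕ+, Complex.exp (Complex.I / (k:ℂ)) * ((‖x k‖ ^ 2 : ℝ) : ℂ) := by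
      rw [lp.inner_eq_tsum]
      exact tsum_congr hterm
    have hnormterm : ∀ k : ℕ+,
        ‖Complex.exp (Complex.I / (k:ℂ)) * ((‖x k‖ ^ 2 : ℝ) : ℂ)‖ = ‖x k‖ ^ 2 := by
      intro k
      rw [norm_mul, aux_abs, one_mul,
        Complex.norm_real, Real.norm_eq_abs, _root_.abs_of_nonneg (by positivity)]
    have hsumm' : Summable (fun k : ℕ+ => Complex.exp (Complex.I / (k:ℂ)) * ((‖x k‖ ^ 2 : ℝ) : ℂ)) := by
      refine Summable.of_norm ?_
      simpa only [hnormterm] using hsq'.summable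
    constructor
    · -- modulus bound
      rw [hinner]
      calc ‖∑' k : ℕ+, Complex.exp (Complex.I / (k:ℂ)) * ((‖x k‖ ^ 2 : ℝ) : ℂ)‖
          ≤ ∑' k : ℕ+, ‖Complex.exp (Complex.I / (k:ℂ)) * ((‖x k‖ ^ 2 : ℝ) : ℂ)‖ :=
            norm_tsum_le_tsum_norm (by simpa only [hnormterm] using hsq'.summable)
        _ = ∑' k : ℕ+, ‖x k‖ ^ 2 := tsum_congr hnormterm
        _ = 1 := hsq'.tsum_eq
    · -- real part bound
      have hre : HasSum (fun k : ℕ+ =>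
          (Complex.exp (Complex.I / (k:ℂ)) * ((‖x k‖ ^ 2 : ℝ) : ℂ)).re) (⟪x, N x⟫).re := by
        rw [hinner]
        exact (Complex.hasSum_iff _ _).mp hsumm'.hasSum |>.1
      have hre' : ∀ k : ℕ+,
          (Complex.exp (Complex.I / (k:ℂ)) * ((‖x k‖ ^ 2 : ℝ) : ℂ)).re
            = Real.cos ((k:ℝ)⁻¹) * ‖x k‖ ^ 2 := by
        intro k
        rw [aux_div, Complex.mul_re, Complex.exp_ofReal_mul_I_re,
          Complex.exp_ofReal_mul_I_im]
        simp [← Complex.ofReal_pow]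
      have hlow : HasSum (fun k : ℕ+ => Real.cos 1 * ‖x k‖ ^ 2) (Real.cos 1) := by
        simpa using hsq'.mul_left (Real.cos 1)
      refine hasSum_le (fun k => ?_) hlow hre
      rw [hre' k]
      have h1 := aux_inv_mem k
      have : Real.cos 1 ≤ Real.cos ((k:ℝ)⁻¹) := by
        apply Real.cos_le_cos_of_nonneg_of_le_pi h1.1.le _ h1.2
        linarith [Real.pi_gt_three]
      nlinarith [sq_nonneg ‖x k‖]
  -- e^{i/k} belongs to the numerical range
  have hmem : ∀ k : ℕ+, Complex.exp (Complex.I / (k:ℂ)) ∈ numRange N := by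
    intro k
    refine ⟨lp.single 2 k (1:ℂ), ?_, ?_⟩
    · have := lp.norm_single (p := 2) (E := fun _ : ℕ+ => ℂ) (by norm_num)
        k (1:ℂ)
      simpa using this
    · rw [lp.inner_single_left]
      simp [hN, lp.single_apply, RCLike.inner_apply]
  have hclos : ∀ z ∈ closure (numRange N), Real.cos 1 ≤ z.re := by
    intro z hz
    have hsub : numRange N ⊆ {w : ℂ | Real.cos 1 ≤ w.re} := fun w hw => (key w hw).2
    have hcl : IsClosed {w : ℂ | Real.cos 1 ≤ w.re} :=
      isClosed_le continuous_const Complex.continuous_re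
    exact (closure_minimal hsub hcl) hz
  have hsub : numRange N ⊆ Metric.closedBall (0:ℂ) 1 := by
    intro z hz
    simpa [Complex.dist_eq] using (key z hz).1
  have hneg : (-1 : ℂ) ∉ closure (numRange N) := by
    intro h
    have := hclos _ h
    simp only [Complex.neg_re, Complex.one_re] at this
    linarith [Real.cos_one_pos]
  refine ⟨hsub, ?_, ?_, hneg⟩
  · -- infinitely many points on the sphere
    have hinj : Function.Injective (fun k : ℕ+ => Complex.exp (Complex.I / (k:ℂ))) := by
      intro j k hjk
      simp only at hjk
      have hj := aux_inv_mem j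
      have hk := aux_inv_mem k
      have him : Real.sin ((j:ℝ)⁻¹) = Real.sin ((k:ℝ)⁻¹) := by
        have := congrArg Complex.im hjk
        rwa [aux_div, aux_div, Complex.exp_ofReal_mul_I_im,
          Complex.exp_ofReal_mul_I_im] at this
      have hpi : (1:ℝ) ≤ Real.pi / 2 := by linarith [Real.pi_gt_three]
      have hinj : (j:ℝ)⁻¹ = (k:ℝ)⁻¹ := by
        apply Real.injOn_sin ⟨by linarith [hj.1], by linarith [hj.2]⟩
          ⟨by linarith [hk.1], by linarith [hk.2]⟩ him
      field_simp at hinj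
      exact PNat.coe_injective (by exact_mod_cast hinj.symm)
    refine Set.infinite_of_injective_forall_mem hinj (fun k => ⟨subset_closure (hmem k), ?_⟩)
    simp [Complex.dist_eq, aux_abs]
  · -- not the full disk
    intro h
    apply hneg
    apply subset_closure
    rw [h]
    simp
end
end

section
/- Let A be the diagonal operator on ℓ²(ℕ) with diagonal entries 1 (at index 0) and i/k (at index k ≥ 1). Then A is compact, the closure of its numerical range equals the convex hull of {0, 1, i}, but no point of the half-open segment [0,1) ⊂ ℝ lies in W(A). -/
open scoped ComplexInnerProductSpace
open Complex

noncomputable section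

variable {H : Type*} [NormedAddCommGroup H] [InnerProductSpace ℂ H] [CompleteSpace H]

namespace Stmt15Aux

open Filter Topology

abbrev H2 : Type := lp (fun _ : ℕ => ℂ) 2

/-- diagonal entries -/
def cdiag : ℕ → ℂ := fun k => if k = 0 then 1 else Complex.I / k

/-- imaginary parts of the diagonal entries -/
def cim : ℕ → ℝ := fun k => if k = 0 then 0 else ((k : ℝ))⁻¹

lemma two_toReal : ((2 : ENNReal)).toReal = ((2 : ℕ) : ℝ) := by simp

lemma hasSum_norm_sq (x : H2) : HasSum (fun k => ‖x k‖ ^ 2) (‖x‖ ^ 2) := by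
  have h := lp.hasSum_norm (p := 2) (by norm_num) x
  simp only [two_toReal, Real.rpow_natCast] at h
  exact h

lemma norm_le_pw (y x : H2) (C : ℝ) (hC : 0 ≤ C) (h : ∀ j, ‖y j‖ ≤ C * ‖x j‖) :
    ‖y‖ ≤ C * ‖x‖ := by
  apply lp.norm_le_of_forall_sum_le (p := 2) (by norm_num) (mul_nonneg hC (norm_nonneg _))
  intro s
  simp only [two_toReal, Real.rpow_natCast]
  have h1 : ∀ i ∈ s, ‖y i‖ ^ 2 ≤ (C * ‖x i‖) ^ 2 := fun i _ =>
    pow_le_pow_left₀ (norm_nonneg _) (h i) 2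
  have h2 : ∑ i ∈ s, ‖x i‖ ^ 2 ≤ ‖x‖ ^ 2 := by
    have := lp.sum_rpow_le_norm_rpow (p := 2) (by norm_num) x s
    simpa only [two_toReal, Real.rpow_natCast] using this
  calc ∑ i ∈ s, ‖y i‖ ^ 2 ≤ ∑ i ∈ s, (C * ‖x i‖) ^ 2 := Finset.sum_le_sum h1
    _ = C ^ 2 * ∑ i ∈ s, ‖x i‖ ^ 2 := by simp [mul_pow, Finset.mul_sum]
    _ ≤ C ^ 2 * ‖x‖ ^ 2 := mul_le_mul_of_nonneg_left h2 (by positivity)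
    _ = (C * ‖x‖) ^ 2 := by ring

lemma cdiag_eq (k : ℕ) (hk : k ≠ 0) : cdiag k = (((k : ℝ))⁻¹ : ℝ) * Complex.I := by
  simp only [cdiag, if_neg hk, div_eq_mul_inv]
  push_cast
  ring

lemma cdiag_mul_re (k : ℕ) (r : ℝ) :
    (cdiag k * (r : ℂ)).re = (if k = 0 then 1 else 0) * r := by
  by_cases hk : k = 0
  · simp [cdiag, hk]
  · rw [cdiag_eq k hk]
    simp [hk, Complex.mul_re]

lemma cdiag_mul_im (k : ℕ) (r : ℝ) :
    (cdiag k * (r : ℂ)).im = cim k * r := by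
  by_cases hk : k = 0
  · simp [cdiag, cim, hk]
  · rw [cdiag_eq k hk]
    simp [cim, hk, Complex.mul_im]

lemma cim_nonneg (k : ℕ) : 0 ≤ cim k := by
  unfold cim; split <;> positivity

section OpA

variable (A : H2 →L[ℂ] H2)
    (hA0 : ∀ x : H2, A x 0 = x 0)
    (hAk : ∀ (x : H2) (k : ℕ), 1 ≤ k → A x k = (Complex.I / (k : ℂ)) * x k)

include hA0 hAk in
lemma apply_eq (x : H2) (j : ℕ) : A x j = cdiag j * x j := by
  cases j with
  | zero => simp [cdiag, hA0 x]
  | succ k =>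
      rw [hAk x (k + 1) (Nat.succ_le_succ (Nat.zero_le _))]
      simp [cdiag]

include hA0 hAk in
lemma hasSum_inner_diag (x : H2) :
    HasSum (fun k => cdiag k * ((‖x k‖ ^ 2 : ℝ) : ℂ)) ⟪x, A x⟫ := by
  have h := lp.hasSum_inner (𝕜 := ℂ) x (A x)
  have he : (fun k => (⟪x k, A x k⟫ : ℂ)) = fun k => cdiag k * ((‖x k‖ ^ 2 : ℝ) : ℂ) := by
    funext k
    rw [RCLike.inner_apply, apply_eq A hA0 hAk x k]
    simp only [mul_assoc, Complex.mul_conj']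
    push_cast
    ring
  rwa [he] at h

include hA0 hAk in
lemma inner_re (x : H2) : (⟪x, A x⟫ : ℂ).re = ‖x 0‖ ^ 2 := by
  have h := ((Complex.hasSum_iff _ _).mp (hasSum_inner_diag A hA0 hAk x)).1
  have he : (fun k => (cdiag k * ((‖x k‖ ^ 2 : ℝ) : ℂ)).re)
      = fun k => if k = 0 then ‖x 0‖ ^ 2 else 0 := by
    funext k
    rw [cdiag_mul_re]
    by_cases hk : k = 0 <;> simp [hk]
  rw [he] at h
  exact h.unique (hasSum_ite_eq 0 _)

include hA0 hAk in
lemma inner_im (x : H2) :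
    HasSum (fun k => cim k * ‖x k‖ ^ 2) (⟪x, A x⟫ : ℂ).im := by
  have h := ((Complex.hasSum_iff _ _).mp (hasSum_inner_diag A hA0 hAk x)).2
  have he : (fun k => (cdiag k * ((‖x k‖ ^ 2 : ℝ) : ℂ)).im)
      = fun k => cim k * ‖x k‖ ^ 2 := by
    funext k
    rw [cdiag_mul_im]
  rwa [he] at h

include hA0 hAk in
lemma part3 : ∀ t : ℝ, 0 ≤ t → t < 1 → (t : ℂ) ∉ numRange A := by
  rintro t _ ht1 ⟨x, hx, hinner⟩
  have him : HasSum (fun k => cim k * ‖x k‖ ^ 2) 0 := by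
    have := inner_im A hA0 hAk x
    rwa [hinner, Complex.ofReal_im] at this
  have hzero : ∀ k : ℕ, k ≠ 0 → x k = 0 := by
    intro k hk
    have hle := le_hasSum him k (fun j _ => mul_nonneg (cim_nonneg j) (by positivity))
    have hkpos : (0 : ℝ) < cim k := by
      have h1 : (0:ℝ) < (k:ℝ) := by exact_mod_cast Nat.pos_of_ne_zero hk
      simp only [cim, if_neg hk]
      positivity
    have h2 : ‖x k‖ ^ 2 ≤ 0 := by nlinarith [sq_nonneg ‖x k‖]
    have h3 : ‖x k‖ = 0 := by nlinarith [norm_nonneg (x k)]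
    exact norm_eq_zero.mp h3
  have hre : (⟪x, A x⟫ : ℂ).re = ‖x 0‖ ^ 2 := inner_re A hA0 hAk x
  rw [hinner, Complex.ofReal_re] at hre
  have hns : HasSum (fun k => ‖x k‖ ^ 2) 1 := by
    have := hasSum_norm_sq x
    rwa [hx, one_pow] at this
  have he : (fun k => ‖x k‖ ^ 2) = fun k => if k = 0 then ‖x 0‖ ^ 2 else 0 := by
    funext k
    by_cases hk : k = 0
    · simp [hk]
    · simp [hk, hzero k hk]
  rw [he] at hns
  have h4 : ‖x 0‖ ^ 2 = 1 := (hasSum_ite_eq 0 _).unique hns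
  rw [← hre] at h4
  rw [h4] at ht1
  exact lt_irrefl _ ht1

end OpA

/-- The triangle. -/
def S : Set ℂ := {z : ℂ | 0 ≤ z.re ∧ 0 ≤ z.im ∧ z.re + z.im ≤ 1}

lemma convex_S : Convex ℝ S := by
  rintro z hz w hw a b ha hb hab
  obtain ⟨h1, h2, h3⟩ := hz
  obtain ⟨h4, h5, h6⟩ := hw
  refine ⟨?_, ?_, ?_⟩ <;>
    simp only [Complex.add_re, Complex.add_im, Complex.smul_re, Complex.smul_im, smul_eq_mul] <;> nlinarith

lemma isClosed_S : IsClosed S := by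
  have h1 : IsClosed {z : ℂ | 0 ≤ z.re} := isClosed_le continuous_const Complex.continuous_re
  have h2 : IsClosed {z : ℂ | 0 ≤ z.im} := isClosed_le continuous_const Complex.continuous_im
  have h3 : IsClosed {z : ℂ | z.re + z.im ≤ 1} :=
    isClosed_le (Complex.continuous_re.add Complex.continuous_im) continuous_const
  exact h1.inter (h2.inter h3)

lemma hull_eq : convexHull ℝ ({0, 1, Complex.I} : Set ℂ) = S := by
  apply le_antisymm
  · apply convexHull_min _ convex_S
    rintro z (rfl | rfl | rfl)
    · exact ⟨le_refl _, by simp [S], by simp [S]⟩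
    · exact ⟨by simp [S], by simp [S], by simp [S]⟩
    · exact ⟨by simp [S], by simp [S], by simp [S]⟩
  · rintro z ⟨h1, h2, h3⟩
    have hmem : ∀ i : Fin 3, ![ (0 : ℂ), 1, Complex.I] i ∈ convexHull ℝ ({0, 1, Complex.I} : Set ℂ) := by
      intro i
      fin_cases i <;> apply subset_convexHull <;> simp
    have := (convex_convexHull ℝ ({0, 1, Complex.I} : Set ℂ)).sum_mem
      (t := (Finset.univ : Finset (Fin 3)))
      (w := ![1 - z.re - z.im, z.re, z.im]) (z := ![0, 1, Complex.I])
      (fun i _ => by fin_cases i <;> simp <;> linarith)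
      (by simp [Fin.sum_univ_three]; ring)
      (fun i _ => hmem i)
    have hz : ∑ i : Fin 3, (![1 - z.re - z.im, z.re, z.im] i) • (![0, 1, Complex.I] i) = z := by
      simp only [Fin.sum_univ_three]
      apply Complex.ext <;>
        simp [Complex.smul_re, Complex.smul_im]
    rwa [hz] at this

section Part2

variable (A : H2 →L[ℂ] H2)
    (hA0 : ∀ x : H2, A x 0 = x 0)
    (hAk : ∀ (x : H2) (k : ℕ), 1 ≤ k → A x k = (Complex.I / (k : ℂ)) * x k)

include hA0 hAk in
lemma W_subset_S : numRange A ⊆ S := by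
  rintro z ⟨x, hx, rfl⟩
  have hre := inner_re A hA0 hAk x
  have him := inner_im A hA0 hAk x
  have hns : HasSum (fun k => ‖x k‖ ^ 2) 1 := by
    have := hasSum_norm_sq x
    rwa [hx, one_pow] at this
  refine ⟨by rw [hre]; positivity, ?_, ?_⟩
  · exact hasSum_le (fun k => mul_nonneg (cim_nonneg k) (by positivity)) hasSum_zero him
  · -- re + im ≤ 1
    have hre' : HasSum (fun k => if k = 0 then ‖x 0‖ ^ 2 else (0:ℝ)) (⟪x, A x⟫ : ℂ).re := by
      rw [hre]; exact hasSum_ite_eq 0 _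
    have hsum := hre'.add him
    refine hasSum_le (fun k => ?_) hsum hns
    by_cases hk : k = 0
    · subst hk; simp [cim]
    · have hk1 : (1:ℝ) ≤ (k:ℝ) := by exact_mod_cast Nat.one_le_iff_ne_zero.mpr hk
      have : cim k ≤ 1 := by
        simp only [cim, if_neg hk]
        rw [inv_le_one_iff₀]; right; exact hk1
      have hnn : (0:ℝ) ≤ ‖x k‖ ^ 2 := by positivity
      simp only [if_neg hk, zero_add]
      nlinarith

include hA0 hAk in
lemma S_subset_closure : S ⊆ closure (numRange A) := by
  rintro z ⟨h1, h2, h3⟩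
  set a := z.re with ha
  set b := z.im with hb
  have hc : 0 ≤ 1 - a - b := by linarith
  -- the approximating vectors
  set c := 1 - a - b with hcdef
  have key : ∀ n : ℕ, ((a : ℂ) + (b : ℂ) * Complex.I + (c : ℂ) * Complex.I * (((n : ℂ)) + 2)⁻¹)
      ∈ numRange A := by
    intro n
    set y : H2 := lp.single 2 0 ((Real.sqrt a : ℝ) : ℂ) + lp.single 2 1 ((Real.sqrt b : ℝ) : ℂ)
      + lp.single 2 (n + 2) ((Real.sqrt c : ℝ) : ℂ) with hy
    have hy0 : y 0 = ((Real.sqrt a : ℝ) : ℂ) := by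
      simp only [hy, lp.coeFn_add, Pi.add_apply]
      rw [lp.single_apply_self, lp.single_apply_ne 2 1 _ (by norm_num),
        lp.single_apply_ne 2 (n+2) _ (by omega)]
      ring
    have hy1 : y 1 = ((Real.sqrt b : ℝ) : ℂ) := by
      simp only [hy, lp.coeFn_add, Pi.add_apply]
      rw [lp.single_apply_self, lp.single_apply_ne 2 0 _ (by norm_num),
        lp.single_apply_ne 2 (n+2) _ (by omega)]
      ring
    have hyn : y (n+2) = ((Real.sqrt c : ℝ) : ℂ) := by
      simp only [hy, lp.coeFn_add, Pi.add_apply]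
      rw [lp.single_apply_self, lp.single_apply_ne 2 0 _ (by omega),
        lp.single_apply_ne 2 1 _ (by omega)]
      ring
    have hyz : ∀ j, j ∉ ({0, 1, n+2} : Finset ℕ) → y j = 0 := by
      intro j hj
      simp only [Finset.mem_insert, Finset.mem_singleton, not_or] at hj
      obtain ⟨hj0, hj1, hjn⟩ := hj
      simp only [hy, lp.coeFn_add, Pi.add_apply]
      rw [lp.single_apply_ne 2 0 _ hj0, lp.single_apply_ne 2 1 _ hj1,
        lp.single_apply_ne 2 (n+2) _ hjn]
      ring
    have hmemF : (0 : ℕ) ∉ ({1, n+2} : Finset ℕ) := by simp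
    have hmemF2 : (1 : ℕ) ∉ ({n+2} : Finset ℕ) := by simp
    -- norm of y
    have hnsq : ∀ (r : ℝ), 0 ≤ r → ‖((Real.sqrt r : ℝ) : ℂ)‖ ^ 2 = r := by
      intro r hr
      rw [Complex.norm_real, Real.norm_eq_abs, _root_.abs_of_nonneg (Real.sqrt_nonneg r),
        Real.sq_sqrt hr]
    have hsum1 : HasSum (fun k => ‖y k‖ ^ 2) 1 := by
      have h := hasSum_sum_of_ne_finset_zero (L := SummationFilter.unconditional ℕ) (s := ({0, 1, n+2} : Finset ℕ))
        (f := fun k => ‖y k‖ ^ 2) (fun j hj => by simp [hyz j hj])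
      have : ∑ j ∈ ({0, 1, n+2} : Finset ℕ), ‖y j‖ ^ 2 = 1 := by
        rw [Finset.sum_insert hmemF, Finset.sum_insert hmemF2, Finset.sum_singleton,
          hy0, hy1, hyn, hnsq a h1, hnsq b h2, hnsq c hc]
        ring
      rwa [this] at h
    have hynorm : ‖y‖ = 1 := by
      have h := (hasSum_norm_sq y).unique hsum1
      nlinarith [norm_nonneg y]
    -- inner product
    have hinner : ⟪y, A y⟫ = (a : ℂ) + (b : ℂ) * Complex.I + (c : ℂ) * Complex.I * (((n : ℂ)) + 2)⁻¹ := by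
      have h := hasSum_inner_diag A hA0 hAk y
      have h2' := hasSum_sum_of_ne_finset_zero (L := SummationFilter.unconditional ℕ) (s := ({0, 1, n+2} : Finset ℕ))
        (f := fun k => cdiag k * ((‖y k‖ ^ 2 : ℝ) : ℂ)) (fun j hj => by simp [hyz j hj])
      have heq := h.unique h2'
      rw [heq, Finset.sum_insert hmemF, Finset.sum_insert hmemF2, Finset.sum_singleton,
        hy0, hy1, hyn, hnsq a h1, hnsq b h2, hnsq c hc]
      have hc0 : cdiag 0 = 1 := by simp [cdiag]
      have hc1 : cdiag 1 = Complex.I := by simp [cdiag]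
      have hcn : cdiag (n+2) = Complex.I / ((n : ℂ) + 2) := by
        simp only [cdiag, if_neg (by omega : ¬ n + 2 = 0)]
        push_cast
        ring_nf
      rw [hc0, hc1, hcn]
      field_simp
      ring
    exact ⟨y, hynorm, hinner⟩
  -- the limit
  have hz : z = (a : ℂ) + (b : ℂ) * Complex.I := (Complex.re_add_im z).symm
  have htend : Tendsto (fun n : ℕ => ((a : ℂ) + (b : ℂ) * Complex.I
      + (c : ℂ) * Complex.I * (((n : ℂ)) + 2)⁻¹)) atTop (𝓝 z) := by
    have hinv : Tendsto (fun n : ℕ => ((((n : ℂ)) + 2)⁻¹ : ℂ)) atTop (𝓝 0) := by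
      rw [tendsto_zero_iff_norm_tendsto_zero]
      have hn : ∀ n : ℕ, ‖(((n : ℂ)) + 2)⁻¹‖ = (((n:ℝ)) + 2)⁻¹ := by
        intro n
        rw [norm_inv]
        congr 1
        have : ((n : ℂ)) + 2 = (((n : ℝ) + 2 : ℝ) : ℂ) := by push_cast; ring
        rw [this, Complex.norm_real]
        exact _root_.abs_of_nonneg (by positivity)
      simp only [hn]
      have : Tendsto (fun n : ℕ => ((n:ℝ)) + 2) atTop atTop :=
        tendsto_atTop_add_const_right atTop 2 tendsto_natCast_atTop_atTop
      exact this.inv_tendsto_atTop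
    have := (tendsto_const_nhds (x := (a : ℂ) + (b : ℂ) * Complex.I) (f := atTop)).add
      ((tendsto_const_nhds (x := (c : ℂ) * Complex.I) (f := atTop)).mul hinv)
    rw [hz]
    simpa using this
  exact mem_closure_of_tendsto htend (Filter.Eventually.of_forall key)

include hA0 hAk in
lemma part2 : closure (numRange A) = convexHull ℝ ({0, 1, Complex.I} : Set ℂ) := by
  rw [hull_eq]
  apply le_antisymm
  · exact closure_minimal (W_subset_S A hA0 hAk) isClosed_S
  · exact S_subset_closure A hA0 hAk

end Part2

section Compactness

/-- evaluation functional -/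
def evalL (k : ℕ) : H2 →L[ℂ] ℂ :=
  LinearMap.mkContinuous
    { toFun := fun x => x k
      map_add' := fun x y => by simp [lp.coeFn_add]
      map_smul' := fun c x => by simp [lp.coeFn_smul] }
    1 (fun x => by show ‖x k‖ ≤ 1 * ‖x‖; simpa using lp.norm_apply_le_norm (by norm_num) x k)

/-- rank one pieces -/
def rank1 (k : ℕ) : H2 →L[ℂ] H2 :=
  (evalL k).smulRight (cdiag k • lp.single 2 k (1 : ℂ))

lemma rank1_coord (k : ℕ) (x : H2) (j : ℕ) :
    (rank1 k x) j = if j = k then cdiag j * x j else 0 := by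
  have h : rank1 k x = x k • (cdiag k • lp.single 2 k (1 : ℂ)) := rfl
  rw [h, lp.coeFn_smul, Pi.smul_apply, lp.coeFn_smul, Pi.smul_apply]
  by_cases hjk : j = k
  · subst hjk
    rw [lp.single_apply_self]
    simp [smul_eq_mul]
    ring
  · rw [lp.single_apply_ne 2 k _ hjk]
    simp [hjk]

lemma isCompact_smulRight (φ : H2 →L[ℂ] ℂ) (v : H2) :
    IsCompactOperator ⇑(φ.smulRight v) := by
  refine ⟨(fun c : ℂ => c • v) '' Metric.closedBall 0 1,
    (isCompact_closedBall (0 : ℂ) 1).image (continuous_id.smul continuous_const), ?_⟩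
  have h : φ ⁻¹' Metric.closedBall 0 1 ∈ 𝓝 (0 : H2) := by
    apply φ.continuous.continuousAt.preimage_mem_nhds
    simpa using Metric.closedBall_mem_nhds (0 : ℂ) one_pos
  apply Filter.mem_of_superset h
  intro x hx
  exact ⟨φ x, hx, rfl⟩

lemma compact_sum (s : Finset ℕ) : IsCompactOperator ⇑(∑ k ∈ s, rank1 k) := by
  induction s using Finset.cons_induction with
  | empty =>
      rw [Finset.sum_empty]
      have h0 : IsCompactOperator (0 : H2 → H2) := isCompactOperator_zero
      simpa using h0
  | cons a s ha ih =>
      rw [Finset.sum_cons]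
      have h := (isCompact_smulRight (evalL a) (cdiag a • lp.single 2 a (1 : ℂ))).add ih
      change IsCompactOperator (⇑(rank1 a) + ⇑(∑ k ∈ s, rank1 k))
      exact h

lemma Fn_coord (n : ℕ) (x : H2) (j : ℕ) :
    ((∑ k ∈ Finset.range n, rank1 k) x) j
      = if j ∈ Finset.range n then cdiag j * x j else 0 := by
  rw [ContinuousLinearMap.sum_apply, lp.coeFn_sum, Finset.sum_apply]
  simp_rw [rank1_coord]
  exact Finset.sum_ite_eq (Finset.range n) j _

variable (A : H2 →L[ℂ] H2)
    (hA0 : ∀ x : H2, A x 0 = x 0)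
    (hAk : ∀ (x : H2) (k : ℕ), 1 ≤ k → A x k = (Complex.I / (k : ℂ)) * x k)

include hA0 hAk in
lemma bound_Fn (n : ℕ) (hn : 1 ≤ n) :
    ‖(∑ k ∈ Finset.range n, rank1 k) - A‖ ≤ ((n : ℝ))⁻¹ := by
  have hnpos : (0:ℝ) < (n:ℝ) := by exact_mod_cast hn
  apply ContinuousLinearMap.opNorm_le_bound _ (by positivity)
  intro x
  apply norm_le_pw _ _ _ (by positivity)
  intro j
  rw [ContinuousLinearMap.sub_apply, lp.coeFn_sub, Pi.sub_apply, Fn_coord,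
    apply_eq A hA0 hAk]
  by_cases hj : j ∈ Finset.range n
  · rw [if_pos hj, sub_self, norm_zero]
    positivity
  · rw [if_neg hj, zero_sub, norm_neg, norm_mul]
    have hj' : n ≤ j := by simpa using hj
    have hj1 : j ≠ 0 := by omega
    have hcd : ‖cdiag j‖ = ((j : ℝ))⁻¹ := by
      rw [cdiag_eq j hj1, norm_mul, Complex.norm_real, Complex.norm_I, mul_one,
        Real.norm_eq_abs]
      exact _root_.abs_of_nonneg (by positivity)
    rw [hcd]
    apply mul_le_mul_of_nonneg_right _ (norm_nonneg _)
    have hjpos : (0:ℝ) < (j:ℝ) := by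
      have : 0 < j := by omega
      exact_mod_cast this
    apply inv_anti₀ hnpos
    exact_mod_cast hj'

include hA0 hAk in
lemma part1 : IsCompactOperator ⇑A := by
  apply isCompactOperator_of_tendsto (l := Filter.atTop)
    (F := fun n : ℕ => ∑ k ∈ Finset.range n, rank1 k)
  · rw [tendsto_iff_norm_sub_tendsto_zero]
    apply squeeze_zero' (Filter.Eventually.of_forall fun n => norm_nonneg _)
      (Filter.eventually_atTop.mpr ⟨1, fun n hn => bound_Fn A hA0 hAk n hn⟩)
    have h : Filter.Tendsto (fun n : ℕ => ((n:ℝ))) Filter.atTop Filter.atTop :=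
      tendsto_natCast_atTop_atTop
    exact h.inv_tendsto_atTop
  · exact Filter.Eventually.of_forall fun n => compact_sum (Finset.range n)

end Compactness

end Stmt15Aux

/-- A compact diagonal operator with entries 1, i/k: cl(W(A)) = conv{0,1,i} but [0,1) ∩ W(A) = ∅. -/
theorem stmt15 (A : lp (fun _ : ℕ => ℂ) 2 →L[ℂ] lp (fun _ : ℕ => ℂ) 2)
    (hA0 : ∀ x : lp (fun _ : ℕ => ℂ) 2, A x 0 = x 0)
    (hAk : ∀ (x : lp (fun _ : ℕ => ℂ) 2) (k : ℕ), 1 ≤ k →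
      A x k = (Complex.I / (k : ℂ)) * x k) :
    IsCompactOperator ⇑A ∧
      closure (numRange A) = convexHull ℝ {0, 1, Complex.I} ∧
      ∀ t : ℝ, 0 ≤ t → t < 1 → (t : ℂ) ∉ numRange A := by
  refine ⟨Stmt15Aux.part1 A hA0 hAk, Stmt15Aux.part2 A hA0 hAk, Stmt15Aux.part3 A hA0 hAk⟩
end
end
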